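/- Let |φ_0000⟩ ∈ ℂ^16 be the 4-qubit linear cluster state and |φ_0101⟩ = Z₂Z₄|φ_0000⟩. Then the eigenspace {ψ ∈ ℂ^16 : B₂^φ ψ = 4ψ} of the Bell operator B₂^φ = ZXIX + YYIX + YXXY − ZYXY for its algebraically maximal eigenvalue 4 is exactly the two-dimensional span of |φ_0000⟩ and |φ_0101⟩; in particular every superposition α|φ_0000⟩ + β|φ_0101⟩ attains ⟨B₂^φ⟩ = 4. -/

import Mathlib

open Matrix

/-- Pauli X matrix on a single qubit (basis indexed by `Bool`). -/
noncomputable def pX : Matrix Bool Bool ℂ := Matrix.of fun b c => if b = c then 0 else 1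

/-- Pauli Y matrix on a single qubit. -/
noncomputable def pY : Matrix Bool Bool ℂ :=
  Matrix.of fun b c => if b = c then 0 else if b then Complex.I else -Complex.I

/-- Pauli Z matrix on a single qubit. -/
noncomputable def pZ : Matrix Bool Bool ℂ :=
  Matrix.of fun b c => if b = c then (if b then -1 else 1) else 0

/-- Tensor product of single-qubit matrices, as an operator on the `n`-qubit space
`(Fin n → Bool) → ℂ ≅ ℂ^(2^n)`. -/
noncomputable def tensorOp {n : ℕ} (M : Fin n → Matrix Bool Bool ℂ) :
    Matrix (Fin n → Bool) (Fin n → Bool) ℂ :=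
  Matrix.of fun f g => ∏ i, M i (f i) (g i)

/-- The 4-qubit linear cluster state `|φ_0000⟩` (graph state of the path `1–2–3–4`):
amplitude `(1/4)·(−1)^(f(1)f(2)+f(2)f(3)+f(3)f(4))` at `|f⟩`. -/
noncomputable def cluster4 : (Fin 4 → Bool) → ℂ := fun f =>
  (1 / 4 : ℂ) * (if f 0 && f 1 then -1 else 1) * (if f 1 && f 2 then -1 else 1)
    * (if f 2 && f 3 then -1 else 1)

/-- `|φ_0101⟩ = Z₂Z₄|φ_0000⟩`. -/
noncomputable def cluster4_0101 : (Fin 4 → Bool) → ℂ :=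
  Matrix.mulVec (tensorOp ![1, pZ, 1, pZ]) cluster4

/-- The Bell operator `B₂^φ = ZXIX + YYIX + YXXY − ZYXY`. -/
noncomputable def bellB2 : Matrix (Fin 4 → Bool) (Fin 4 → Bool) ℂ :=
  tensorOp ![pZ, pX, 1, pX] + tensorOp ![pY, pY, 1, pX]
    + tensorOp ![pY, pX, pX, pY] - tensorOp ![pZ, pY, pX, pY]

def pEquiv : (Bool × Bool × Bool × Bool) ≃ (Fin 4 → Bool) where
  toFun p := ![p.1, p.2.1, p.2.2.1, p.2.2.2]
  invFun g := (g 0, g 1, g 2, g 3)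
  left_inv := by decide
  right_inv := by decide
lemma eta4 (f : Fin 4 → Bool) : f = ![f 0, f 1, f 2, f 3] := by
  funext i; fin_cases i <;> rfl
lemma sum_pi4 (σ : (Fin 4 → Bool) → ℂ) :
    ∑ g, σ g =
      σ ![false,false,false,false] + σ ![false,false,false,true] +
      σ ![false,false,true,false] + σ ![false,false,true,true] +
      σ ![false,true,false,false] + σ ![false,true,false,true] +
      σ ![false,true,true,false] + σ ![false,true,true,true] +
      σ ![true,false,false,false] + σ ![true,false,false,true] +
      σ ![true,false,true,false] + σ ![true,false,true,true] +
      σ ![true,true,false,false] + σ ![true,true,false,true] +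
      σ ![true,true,true,false] + σ ![true,true,true,true] := by
  rw [← Equiv.sum_comp pEquiv σ]
  simp only [Fintype.sum_prod_type, Fintype.sum_bool, pEquiv, Equiv.coe_fn_mk]
  ring

lemma c2_apply (f : Fin 4 → Bool) :
    cluster4_0101 f = (if f 1 then -1 else 1) * (if f 3 then -1 else 1) * cluster4 f := by
  have : cluster4_0101 f = ∑ g, tensorOp ![1, pZ, 1, pZ] f g * cluster4 g := by
    simp [cluster4_0101, Matrix.mulVec, dotProduct]
  rw [this, sum_pi4]
  cases h0 : f 0 <;> cases h1 : f 1 <;> cases h2 : f 2 <;> cases h3 : f 3 <;>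
    simp [tensorOp, pZ, cluster4, Matrix.one_apply, Fin.prod_univ_four, h0, h1, h2, h3] <;>
    norm_num

set_option maxHeartbeats 2000000 in
lemma bell_clu : bellB2.mulVec cluster4 = (4:ℂ) • cluster4 := by
  funext f
  have : bellB2.mulVec cluster4 f = ∑ g, bellB2 f g * cluster4 g := by
    simp [Matrix.mulVec, dotProduct]
  rw [this, sum_pi4]
  cases h0 : f 0 <;> cases h1 : f 1 <;> cases h2 : f 2 <;> cases h3 : f 3 <;>
    simp only [bellB2, Matrix.add_apply, Matrix.sub_apply, tensorOp, Matrix.of_apply,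
      Fin.prod_univ_four, Matrix.cons_val_zero, Matrix.cons_val_one, Matrix.head_cons,
      Matrix.cons_val_two, Matrix.tail_cons, Matrix.cons_val_three, Matrix.head_fin_const,
      pX, pY, pZ, Matrix.one_apply, cluster4, h0, h1, h2, h3, Pi.smul_apply, smul_eq_mul] <;>
    norm_num <;>
    ring_nf <;>
    simp [Complex.I_sq] <;> ring_nf

set_option maxHeartbeats 2000000 in
lemma bell_c2 : bellB2.mulVec cluster4_0101 = (4:ℂ) • cluster4_0101 := by
  funext f
  have : bellB2.mulVec cluster4_0101 f = ∑ g, bellB2 f g * cluster4_0101 g := by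
    simp [Matrix.mulVec, dotProduct]
  rw [this, sum_pi4]
  cases h0 : f 0 <;> cases h1 : f 1 <;> cases h2 : f 2 <;> cases h3 : f 3 <;>
    simp only [c2_apply, bellB2, Matrix.add_apply, Matrix.sub_apply, tensorOp, Matrix.of_apply,
      Fin.prod_univ_four, Matrix.cons_val_zero, Matrix.cons_val_one, Matrix.head_cons,
      Matrix.cons_val_two, Matrix.tail_cons, Matrix.cons_val_three, Matrix.head_fin_const,
      pX, pY, pZ, Matrix.one_apply,
      cluster4, h0, h1, h2, h3, Pi.smul_apply, smul_eq_mul] <;>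
    norm_num

set_option maxHeartbeats 4000000 in
/-- The eigenspace of `B₂^φ` for its algebraically maximal eigenvalue `4`
is exactly the two-dimensional span of `|φ_0000⟩` and `|φ_0101⟩`; in particular every
superposition `α|φ_0000⟩ + β|φ_0101⟩` attains `⟨B₂^φ⟩ = 4`. -/
theorem stmt8 :
    Module.End.eigenspace (Matrix.mulVecLin bellB2) (4 : ℂ)
      = Submodule.span ℂ ({cluster4, cluster4_0101} : Set ((Fin 4 → Bool) → ℂ)) ∧
    Module.finrank ℂ
      ↥(Submodule.span ℂ ({cluster4, cluster4_0101} : Set ((Fin 4 → Bool) → ℂ))) = 2 := by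
  have hind : LinearIndependent ℂ ![cluster4, cluster4_0101] := by
    rw [LinearIndependent.pair_iff]
    intro s t hst
    have h1 := congrFun hst ![false,false,false,false]
    have h2 := congrFun hst ![false,false,false,true]
    simp only [Pi.add_apply, Pi.smul_apply, smul_eq_mul, Pi.zero_apply] at h1 h2
    norm_num [cluster4, c2_apply, Matrix.cons_val_two, Matrix.cons_val_three, Matrix.tail_cons, Matrix.head_cons] at h1 h2
    constructor
    · linear_combination 2 * h1 + 2 * h2
    · linear_combination 2 * h1 - 2 * h2
  constructor
  · apply le_antisymm
    · intro ψ hψ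
      rw [Module.End.mem_eigenspace_iff] at hψ
      have key : ∀ f, (∑ g, bellB2 f g * ψ g) = (4:ℂ) * ψ f := by
        intro f
        have := congrFun hψ f
        simpa [Matrix.mulVecLin_apply, Matrix.mulVec, dotProduct] using this
      have H0 := key ![false,false,false,false]
      rw [sum_pi4] at H0
      have H1 := key ![false,false,false,true]
      rw [sum_pi4] at H1
      have H2 := key ![false,false,true,false]
      rw [sum_pi4] at H2
      have H3 := key ![false,false,true,true]
      rw [sum_pi4] at H3
      have H4 := key ![false,true,false,false]
      rw [sum_pi4] at H4
      have H5 := key ![false,true,false,true]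
      rw [sum_pi4] at H5
      have H6 := key ![false,true,true,false]
      rw [sum_pi4] at H6
      have H7 := key ![false,true,true,true]
      rw [sum_pi4] at H7
      have H8 := key ![true,false,false,false]
      rw [sum_pi4] at H8
      have H9 := key ![true,false,false,true]
      rw [sum_pi4] at H9
      have H10 := key ![true,false,true,false]
      rw [sum_pi4] at H10
      have H11 := key ![true,false,true,true]
      rw [sum_pi4] at H11
      have H12 := key ![true,true,false,false]
      rw [sum_pi4] at H12
      have H13 := key ![true,true,false,true]
      rw [sum_pi4] at H13
      have H14 := key ![true,true,true,false]
      rw [sum_pi4] at H14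
      have H15 := key ![true,true,true,true]
      rw [sum_pi4] at H15
      simp only [bellB2, Matrix.add_apply, Matrix.sub_apply, tensorOp, Matrix.of_apply,
        Fin.prod_univ_four, Matrix.cons_val_zero, Matrix.cons_val_one, Matrix.head_cons,
        Matrix.cons_val_two, Matrix.tail_cons, Matrix.cons_val_three, Matrix.head_fin_const,
        pX, pY, pZ, Matrix.one_apply] at H0 H1 H2 H3 H4 H5 H6 H7 H8 H9 H10 H11 H12 H13 H14 H15
      norm_num at H0 H1 H2 H3 H4 H5 H6 H7 H8 H9 H10 H11 H12 H13 H14 H15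
      refine Submodule.mem_span_pair.mpr
        ⟨2*(ψ ![true,true,true,false] - ψ ![true,true,true,true]),
         -2*(ψ ![true,true,true,false] + ψ ![true,true,true,true]), ?_⟩
      funext f
      rw [eta4 f]
      cases h0 : f 0 <;> cases h1 : f 1 <;> cases h2 : f 2 <;> cases h3 : f 3 <;>
        simp only [h0, h1, h2, h3, Pi.add_apply, Pi.smul_apply, smul_eq_mul] <;>
        norm_num [cluster4, c2_apply, Matrix.cons_val_two, Matrix.cons_val_three, Matrix.tail_cons, Matrix.head_cons]
      · linear_combination (7/16 : ℂ) * H0 + (3/16 : ℂ) * H2 + (1/4 : ℂ) * H5 + (1/4 : ℂ) * H7 + (3/16 : ℂ) * H8 + (3/16 : ℂ) * H10 + (-1/4 : ℂ) * H13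
      · linear_combination (7/16 : ℂ) * H1 + (-3/16 : ℂ) * H3 + (1/4 : ℂ) * H4 + (-1/4 : ℂ) * H6 + (3/16 : ℂ) * H9 + (-3/16 : ℂ) * H11 + (-1/4 : ℂ) * H12
      · linear_combination (3/16 : ℂ) * H0 + (7/16 : ℂ) * H2 + (1/4 : ℂ) * H5 + (1/4 : ℂ) * H7 + (3/16 : ℂ) * H8 + (3/16 : ℂ) * H10 + (-1/4 : ℂ) * H13
      · linear_combination (-3/16 : ℂ) * H1 + (7/16 : ℂ) * H3 + (-1/4 : ℂ) * H4 + (1/4 : ℂ) * H6 + (-3/16 : ℂ) * H9 + (3/16 : ℂ) * H11 + (1/4 : ℂ) * H12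
      · linear_combination (1/4 : ℂ) * H1 + (-1/4 : ℂ) * H3 + (1/2 : ℂ) * H4 + (-1/4 : ℂ) * H6 + (1/4 : ℂ) * H9 + (-1/4 : ℂ) * H11 + (-1/4 : ℂ) * H12
      · linear_combination (1/4 : ℂ) * H0 + (1/4 : ℂ) * H2 + (1/2 : ℂ) * H5 + (1/4 : ℂ) * H7 + (1/4 : ℂ) * H8 + (1/4 : ℂ) * H10 + (-1/4 : ℂ) * H13
      · linear_combination (-1/4 : ℂ) * H1 + (1/4 : ℂ) * H3 + (-1/4 : ℂ) * H4 + (1/2 : ℂ) * H6 + (-1/4 : ℂ) * H9 + (1/4 : ℂ) * H11 + (1/4 : ℂ) * H12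
      · linear_combination (1/4 : ℂ) * H0 + (1/4 : ℂ) * H2 + (1/4 : ℂ) * H5 + (1/2 : ℂ) * H7 + (1/4 : ℂ) * H8 + (1/4 : ℂ) * H10 + (-1/4 : ℂ) * H13
      · linear_combination (3/16 : ℂ) * H0 + (3/16 : ℂ) * H2 + (1/4 : ℂ) * H5 + (1/4 : ℂ) * H7 + (7/16 : ℂ) * H8 + (3/16 : ℂ) * H10 + (-1/4 : ℂ) * H13
      · linear_combination (3/16 : ℂ) * H1 + (-3/16 : ℂ) * H3 + (1/4 : ℂ) * H4 + (-1/4 : ℂ) * H6 + (7/16 : ℂ) * H9 + (-3/16 : ℂ) * H11 + (-1/4 : ℂ) * H12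
      · linear_combination (3/16 : ℂ) * H0 + (3/16 : ℂ) * H2 + (1/4 : ℂ) * H5 + (1/4 : ℂ) * H7 + (3/16 : ℂ) * H8 + (7/16 : ℂ) * H10 + (-1/4 : ℂ) * H13
      · linear_combination (-3/16 : ℂ) * H1 + (3/16 : ℂ) * H3 + (-1/4 : ℂ) * H4 + (1/4 : ℂ) * H6 + (-3/16 : ℂ) * H9 + (7/16 : ℂ) * H11 + (1/4 : ℂ) * H12
      · linear_combination (-1/4 : ℂ) * H1 + (1/4 : ℂ) * H3 + (-1/4 : ℂ) * H4 + (1/4 : ℂ) * H6 + (-1/4 : ℂ) * H9 + (1/4 : ℂ) * H11 + (1/2 : ℂ) * H12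
      · linear_combination (-1/4 : ℂ) * H0 + (-1/4 : ℂ) * H2 + (-1/4 : ℂ) * H5 + (-1/4 : ℂ) * H7 + (-1/4 : ℂ) * H8 + (-1/4 : ℂ) * H10 + (1/2 : ℂ) * H13
      · linear_combination (0:ℂ) * H0
      · linear_combination (0:ℂ) * H0
    · rw [Submodule.span_le]
      rintro x hx
      simp only [Set.mem_insert_iff, Set.mem_singleton_iff] at hx
      rcases hx with rfl | rfl <;>
        · rw [SetLike.mem_coe, Module.End.mem_eigenspace_iff]
          show bellB2.mulVec _ = _
          first
            | exact bell_clu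
            | exact bell_c2
  · have hr : Set.range ![cluster4, cluster4_0101]
        = ({cluster4, cluster4_0101} : Set ((Fin 4 → Bool) → ℂ)) := by
      ext x
      simp only [Set.mem_range, Fin.exists_fin_two, Matrix.cons_val_zero, Matrix.cons_val_one,
        Matrix.head_cons, Set.mem_insert_iff, Set.mem_singleton_iff, eq_comm]
    rw [← hr, finrank_span_eq_card hind]
    simp
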